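/- arXiv:1312.5955 — 2 statements merged into one kernel-verified Lean document; each statement's English description precedes it below -/
import Mathlib

section
/- Let n ≥ 2, let w, w' be integers, and let μ = (μ₁ ≥ ⋯ ≥ μ_n) and λ = (λ₁ ≥ ⋯ ≥ λ_{n-1}) be integer tuples satisfying the two chains of inequalities: -μ_n ≥ λ₁ ≥ -μ_{n-1} ≥ λ₂ ≥ ⋯ ≥ λ_{n-1} ≥ -μ₁ and w - μ_n ≥ λ₁ - w' ≥ w - μ_{n-1} ≥ λ₂ - w' ≥ ⋯ ≥ λ_{n-1} - w' ≥ w - μ₁. Then for all 1 ≤ i ≤ n and 1 ≤ j ≤ n-1, both of the following hold: (1+(w+w') + |2μ_i + 2λ_j + 2n - 2i - 2j + 1 - (w+w')|)/2 ≥ 1 and (1-(w+w') + |2μ_i + 2λ_j + 2n - 2i - 2j + 1 - (w+w')|)/2 ≥ 1. -/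
private lemma mu_anti (n : ℕ) (μ : ℕ → ℤ)
    (hμ : ∀ i, 1 ≤ i → i < n → μ (i + 1) ≤ μ i) :
    ∀ a b, 1 ≤ a → a ≤ b → b ≤ n → μ b ≤ μ a := by
  intro a b ha hab hbn
  induction b with
  | zero => omega
  | succ k ih =>
    rcases Nat.eq_or_lt_of_le hab with h | h
    · rw [h]
    · exact le_trans (hμ k (by omega) (by omega)) (ih (by omega) (by omega))

/-- At a complex place, if `μ^∨ ≻ λ` both at the embedding and its conjugate
(the two inequality chains below, with purity weights `w, w'`), then `s = 1/2` is
critical: every Gamma factor on both sides of the functional equation is regular,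
i.e. the arguments `(1 ± (w+w') + |2μ_i + 2λ_j + 2n - 2i - 2j + 1 - (w+w')|)/2`
are `≥ 1`. -/
theorem stmt5 (n : ℕ) (hn : 2 ≤ n) (w w' : ℤ) (μ lam : ℕ → ℤ)
    (hμ : ∀ i, 1 ≤ i → i < n → μ (i + 1) ≤ μ i)
    (hlam : ∀ j, 1 ≤ j → j + 1 ≤ n - 1 → lam (j + 1) ≤ lam j)
    (hch1 : ∀ j, 1 ≤ j → j ≤ n - 1 → -μ (n + 1 - j) ≥ lam j ∧ lam j ≥ -μ (n - j))
    (hch2 : ∀ j, 1 ≤ j → j ≤ n - 1 →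
      w - μ (n + 1 - j) ≥ lam j - w' ∧ lam j - w' ≥ w - μ (n - j)) :
    ∀ i j : ℕ, 1 ≤ i → i ≤ n → 1 ≤ j → j ≤ n - 1 →
      (1 : ℚ) ≤ ((1 + (w + w') +
          |2 * μ i + 2 * lam j + 2 * (n : ℤ) - 2 * (i : ℤ) - 2 * (j : ℤ) + 1 - (w + w')| : ℤ) : ℚ) / 2 ∧
      (1 : ℚ) ≤ ((1 - (w + w') +
          |2 * μ i + 2 * lam j + 2 * (n : ℤ) - 2 * (i : ℤ) - 2 * (j : ℤ) + 1 - (w + w')| : ℤ) : ℚ) / 2 := by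
  intro i j hi hin hj hjn
  set A : ℤ := 2 * μ i + 2 * lam j + 2 * (n : ℤ) - 2 * (i : ℤ) - 2 * (j : ℤ) + 1 - (w + w')
    with hA
  have key : (2 : ℤ) ≤ 1 + (w + w') + |A| ∧ (2 : ℤ) ≤ 1 - (w + w') + |A| := by
    rcases le_or_gt (i + j) n with h | h
    · -- i + j ≤ n : A is large positive
      have h1 := (hch1 j hj hjn).2
      have h2 := (hch2 j hj hjn).2
      have hm := mu_anti n μ hμ i (n - j) hi (by omega) (by omega)
      have hc : (i : ℤ) + (j : ℤ) ≤ (n : ℤ) := by exact_mod_cast h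
      have k1 : 1 - (w + w') ≤ A := by rw [hA]; linarith
      have k2 : (w + w') + 1 ≤ A := by rw [hA]; linarith
      have habs : |A| = A := abs_of_nonneg (by linarith)
      rw [habs]
      constructor <;> linarith
    · -- i + j > n : A is large negative
      have h1 := (hch1 j hj hjn).1
      have h2 := (hch2 j hj hjn).1
      have hm := mu_anti n μ hμ (n + 1 - j) i (by omega) (by omega) hin
      have hc : (n : ℤ) < (i : ℤ) + (j : ℤ) := by exact_mod_cast h
      have k1 : A ≤ (w + w') - 1 := by rw [hA]; linarith
      have k2 : A ≤ -1 - (w + w') := by rw [hA]; linarith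
      have habs : |A| = -A := abs_of_nonpos (by linarith)
      rw [habs]
      constructor <;> linarith
  refine ⟨?_, ?_⟩ <;>
    rw [le_div_iff₀ (by norm_num : (0 : ℚ) < 2), one_mul]
  · exact_mod_cast key.1
  · exact_mod_cast key.2
end

section
/- Let n ≥ 2, w, w' ∈ ℤ, and let μ = (μ₁ ≥ ⋯ ≥ μ_n), λ = (λ₁ ≥ ⋯ ≥ λ_{n-1}) satisfy the interlacing hypotheses -μ_n ≥ λ₁ ≥ -μ_{n-1} ≥ ⋯ ≥ λ_{n-1} ≥ -μ₁ and w-μ_n ≥ λ₁-w' ≥ w-μ_{n-1} ≥ ⋯ ≥ λ_{n-1}-w' ≥ w-μ₁. Define m⁺ := min over 1≤j≤n-1 of {-μ_{n+1-j}-λ_j} ∪ {μ_{n-j}+λ_j-(w+w')}, and m⁻ := max over 1≤j≤n-1 of {-μ_{n-j}-λ_j} ∪ {μ_{n+1-j}+λ_j-(w+w')}. Then m⁻ ≤ 0 ≤ m⁺, and for an integer m, the inequalities m + (1+(w+w')+|2μ_i+2λ_j+2n-2i-2j+1-(w+w')|)/2 ≥ 1 and -m + (1-(w+w')+|2μ_i+2λ_j+2n-2i-2j+1-(w+w')|)/2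 ≥ 1 hold for all 1≤i≤n, 1≤j≤n-1 if and only if m⁻ ≤ m ≤ m⁺. -/
private lemma aux1 (a k : ℤ) : ((1 : ℚ) ≤ (a : ℚ) + (k : ℚ) / 2) ↔ 2 ≤ 2 * a + k := by
  constructor
  · intro h
    have h2 : (2 : ℚ) ≤ 2 * (a : ℚ) + (k : ℚ) := by linarith
    exact_mod_cast h2
  · intro h
    have h2 : (2 : ℚ) ≤ 2 * (a : ℚ) + (k : ℚ) := by exact_mod_cast h
    linarith

private lemma aux2 (a k : ℤ) : ((1 : ℚ) ≤ -(a : ℚ) + (k : ℚ) / 2) ↔ 2 ≤ -(2 * a) + k := by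
  constructor
  · intro h
    have h2 : (2 : ℚ) ≤ -(2 * (a : ℚ)) + (k : ℚ) := by linarith
    exact_mod_cast h2
  · intro h
    have h2 : (2 : ℚ) ≤ -(2 * (a : ℚ)) + (k : ℚ) := by exact_mod_cast h
    linarith

/-- Proposition `prop:crit-glnc`: at a complex place, with `μ^∨ ≻ λ` at the embedding and
its conjugate (the two chains, with purity weights `w, w'`), set
`m⁺ = min_j { -μ_{n+1-j} - λ_j, μ_{n-j} + λ_j - (w+w') }` and
`m⁻ = max_j { -μ_{n-j} - λ_j, μ_{n+1-j} + λ_j - (w+w') }`.  Then `m⁻ ≤ 0 ≤ m⁺`, and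
for `m : ℤ` the Gamma-factor regularity inequalities (criticality of `1/2 + m`) hold for
all `1 ≤ i ≤ n`, `1 ≤ j ≤ n-1` iff `m⁻ ≤ m ≤ m⁺`. -/
theorem stmt6 (n : ℕ) (hn : 2 ≤ n) (w w' : ℤ) (μ lam : ℕ → ℤ)
    (hμ : ∀ i, 1 ≤ i → i < n → μ (i + 1) ≤ μ i)
    (hlam : ∀ j, 1 ≤ j → j + 1 ≤ n - 1 → lam (j + 1) ≤ lam j)
    (hch1 : ∀ j, 1 ≤ j → j ≤ n - 1 → -μ (n + 1 - j) ≥ lam j ∧ lam j ≥ -μ (n - j))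
    (hch2 : ∀ j, 1 ≤ j → j ≤ n - 1 →
      w - μ (n + 1 - j) ≥ lam j - w' ∧ lam j - w' ≥ w - μ (n - j)) :
    let mPlus : ℤ := (Finset.Icc 1 (n - 1)).inf' (Finset.nonempty_Icc.mpr (by omega))
      (fun j => min (-μ (n + 1 - j) - lam j) (μ (n - j) + lam j - (w + w')))
    let mMinus : ℤ := (Finset.Icc 1 (n - 1)).sup' (Finset.nonempty_Icc.mpr (by omega))
      (fun j => max (-μ (n - j) - lam j) (μ (n + 1 - j) + lam j - (w + w')))
    (mMinus ≤ 0 ∧ 0 ≤ mPlus) ∧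
    ∀ m : ℤ,
      (∀ i j : ℕ, 1 ≤ i → i ≤ n → 1 ≤ j → j ≤ n - 1 →
        (1 : ℚ) ≤ (m : ℚ) + ((1 + (w + w') +
            |2 * μ i + 2 * lam j + 2 * (n : ℤ) - 2 * (i : ℤ) - 2 * (j : ℤ) + 1 - (w + w')| : ℤ) : ℚ) / 2 ∧
        (1 : ℚ) ≤ -(m : ℚ) + ((1 - (w + w') +
            |2 * μ i + 2 * lam j + 2 * (n : ℤ) - 2 * (i : ℤ) - 2 * (j : ℤ) + 1 - (w + w')| : ℤ) : ℚ) / 2)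
      ↔ (mMinus ≤ m ∧ m ≤ mPlus) := by
  -- monotonicity of μ on [1,n]
  have hμmono : ∀ a b : ℕ, 1 ≤ a → a ≤ b → b ≤ n → μ b ≤ μ a := by
    intro a b ha hab hbn
    induction b with
    | zero => exact absurd hab (by omega)
    | succ k ih =>
      rcases Nat.eq_or_lt_of_le hab with h | h
      · rw [h]
      · have h1 := ih (by omega) (by omega)
        have h2 := hμ k (by omega) (by omega)
        omega
  intro mPlus mMinus
  refine ⟨⟨?_, ?_⟩, ?_⟩
  · exact Finset.sup'_le _ _ fun j hj => by
      simp only [Finset.mem_Icc] at hj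
      have hc1 := hch1 j hj.1 hj.2
      have hc2 := hch2 j hj.1 hj.2
      simp only [max_le_iff]
      omega
  · exact Finset.le_inf' _ _ fun j hj => by
      simp only [Finset.mem_Icc] at hj
      have hc1 := hch1 j hj.1 hj.2
      have hc2 := hch2 j hj.1 hj.2
      simp only [le_min_iff]
      omega
  · intro m
    constructor
    · intro h
      constructor
      · refine Finset.sup'_le _ _ fun j hj => ?_
        simp only [Finset.mem_Icc] at hj
        obtain ⟨hj1, hj2⟩ := hj
        have hc1 := hch1 j hj1 hj2
        have hc2 := hch2 j hj1 hj2
        have h1 := h (n - j) j (by omega) (by omega) hj1 hj2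
        have h2 := h (n + 1 - j) j (by omega) (by omega) hj1 hj2
        rw [aux1, aux2] at h1 h2
        set A1 := 2 * μ (n - j) + 2 * lam j + 2 * (n : ℤ) - 2 * ((n - j : ℕ) : ℤ)
          - 2 * (j : ℤ) + 1 - (w + w') with hA1
        set A2 := 2 * μ (n + 1 - j) + 2 * lam j + 2 * (n : ℤ) - 2 * ((n + 1 - j : ℕ) : ℤ)
          - 2 * (j : ℤ) + 1 - (w + w') with hA2
        have e1 : ((n - j : ℕ) : ℤ) = (n : ℤ) - j := by omega
        have e2 : ((n + 1 - j : ℕ) : ℤ) = (n : ℤ) + 1 - j := by omega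
        have c1 := abs_choice A1
        have c2 := abs_choice A2
        have n1 := abs_nonneg A1
        have n2 := abs_nonneg A2
        simp only [max_le_iff]
        omega
      · refine Finset.le_inf' _ _ fun j hj => ?_
        simp only [Finset.mem_Icc] at hj
        obtain ⟨hj1, hj2⟩ := hj
        have hc1 := hch1 j hj1 hj2
        have hc2 := hch2 j hj1 hj2
        have h1 := h (n - j) j (by omega) (by omega) hj1 hj2
        have h2 := h (n + 1 - j) j (by omega) (by omega) hj1 hj2
        rw [aux1, aux2] at h1 h2
        set A1 := 2 * μ (n - j) + 2 * lam j + 2 * (n : ℤ) - 2 * ((n - j : ℕ) : ℤ)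
          - 2 * (j : ℤ) + 1 - (w + w') with hA1
        set A2 := 2 * μ (n + 1 - j) + 2 * lam j + 2 * (n : ℤ) - 2 * ((n + 1 - j : ℕ) : ℤ)
          - 2 * (j : ℤ) + 1 - (w + w') with hA2
        have e1 : ((n - j : ℕ) : ℤ) = (n : ℤ) - j := by omega
        have e2 : ((n + 1 - j : ℕ) : ℤ) = (n : ℤ) + 1 - j := by omega
        have c1 := abs_choice A1
        have c2 := abs_choice A2
        have n1 := abs_nonneg A1
        have n2 := abs_nonneg A2
        simp only [le_min_iff]
        omega
    · rintro ⟨hlo, hhi⟩ i j hi1 hi2 hj1 hj2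
      have hjmem : j ∈ Finset.Icc 1 (n - 1) := Finset.mem_Icc.mpr ⟨hj1, hj2⟩
      have hPj : mPlus ≤ min (-μ (n + 1 - j) - lam j) (μ (n - j) + lam j - (w + w')) :=
        Finset.inf'_le (fun j => min (-μ (n + 1 - j) - lam j) (μ (n - j) + lam j - (w + w'))) hjmem
      have hMj : max (-μ (n - j) - lam j) (μ (n + 1 - j) + lam j - (w + w')) ≤ mMinus :=
        Finset.le_sup' (fun j => max (-μ (n - j) - lam j) (μ (n + 1 - j) + lam j - (w + w'))) hjmem
      have hA : -μ (n - j) - lam j ≤ m :=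
        le_trans (le_trans (le_max_left _ _) hMj) hlo
      have hB : μ (n + 1 - j) + lam j - (w + w') ≤ m :=
        le_trans (le_trans (le_max_right _ _) hMj) hlo
      have hC : m ≤ -μ (n + 1 - j) - lam j :=
        le_trans hhi (le_trans hPj (min_le_left _ _))
      have hD : m ≤ μ (n - j) + lam j - (w + w') :=
        le_trans hhi (le_trans hPj (min_le_right _ _))
      rw [aux1, aux2]
      set A := 2 * μ i + 2 * lam j + 2 * (n : ℤ) - 2 * (i : ℤ) - 2 * (j : ℤ) + 1 - (w + w')
        with hA'
      have habs1 := le_abs_self A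
      have habs2 := neg_abs_le A
      rcases le_or_gt i (n - j) with hcase | hcase
      · have hmono : μ (n - j) ≤ μ i := hμmono i (n - j) hi1 hcase (by omega)
        have hij : (i : ℤ) + (j : ℤ) ≤ (n : ℤ) := by omega
        omega
      · have hmono : μ i ≤ μ (n + 1 - j) := hμmono (n + 1 - j) i (by omega) (by omega) hi2
        have hij : (n : ℤ) + 1 ≤ (i : ℤ) + (j : ℤ) := by omega
        omega
end
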